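/- arXiv:2201.10337 — 3 statements merged into one kernel-verified Lean document; each statement's English description precedes it below -/
import Mathlib

section
/- If p is a real polynomial such that |p(s)| ≤ (1+s)^N / s for all s > 0 (where N is a positive integer), then |p(0)| ≤ e² N². -/
open Finset Polynomial Filter

lemma aux_key_ineq {x : ℝ} (h0 : 0 ≤ x) : (1 - x) * Real.exp (2*x) ≤ 1 + x := by
  have key : 1 - x ≤ (1 + x) * Real.exp (-(2*x)) := by
    set g : ℝ → ℝ := fun y => (1 + y) * Real.exp (-(2*y)) + y - 1 with hg
    have hderiv : ∀ y : ℝ, HasDerivAt g (1 - (1 + 2*y) * Real.exp (-(2*y))) y := by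
      intro y
      have h1 : HasDerivAt (fun y : ℝ => 1 + y) 1 y := by
        simpa using (hasDerivAt_id y).const_add 1
      have h2 : HasDerivAt (fun y : ℝ => Real.exp (-(2*y))) (Real.exp (-(2*y)) * (-2)) y := by
        have : HasDerivAt (fun y : ℝ => -(2*y)) (-2) y := by
          exact (((hasDerivAt_id y).const_mul (2:ℝ)).neg).congr_deriv (by ring)
        exact (Real.hasDerivAt_exp _).comp y this
      have := (h1.mul h2).add_const 0
      have h3 : HasDerivAt (fun y : ℝ => (1 + y) * Real.exp (-(2*y))) 
          (1 * Real.exp (-(2*y)) + (1 + y) * (Real.exp (-(2*y)) * (-2))) y := h1.mul h2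
      have h4 := (h3.add (hasDerivAt_id y)).sub_const 1
      refine h4.congr_deriv ?_
      ring
    have hmono : Monotone g := by
      apply monotone_of_deriv_nonneg
      · intro y; exact (hderiv y).differentiableAt
      · intro y
        rw [(hderiv y).deriv]
        have : 1 + 2*y ≤ Real.exp (2*y) := by
          simpa [add_comm] using Real.add_one_le_exp (2*y)
        have hpos := Real.exp_pos (-(2*y))
        rw [Real.exp_neg] at hpos ⊢
        rw [sub_nonneg]
        calc (1 + 2*y) * (Real.exp (2*y))⁻¹ ≤ Real.exp (2*y) * (Real.exp (2*y))⁻¹ := by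
              apply mul_le_mul_of_nonneg_right this (by positivity)
          _ = 1 := mul_inv_cancel₀ (Real.exp_pos _).ne'
        
    have h00 : g 0 = 0 := by simp [hg]
    have := hmono h0
    rw [h00] at this
    simp only [hg] at this
    linarith
  calc (1 - x) * Real.exp (2*x) ≤ ((1 + x) * Real.exp (-(2*x))) * Real.exp (2*x) := by
        apply mul_le_mul_of_nonneg_right key (Real.exp_nonneg _)
    _ = 1 + x := by rw [mul_assoc, ← Real.exp_add]; simp

-- erase split
lemma aux_erase_split {M : Type*} [CommMonoid M] (f : ℕ → M) (N k : ℕ) (hk : k < N) :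
    ∏ j ∈ (range N).erase k, f j = (∏ j ∈ range k, f j) * ∏ j ∈ Ico (k+1) N, f j := by
  have hset : (range N).erase k = range k ∪ Ico (k+1) N := by
    ext x
    simp only [mem_erase, mem_range, mem_union, mem_Ico]
    omega
  rw [hset, Finset.prod_union]
  rw [Finset.disjoint_left]
  intro a ha hb
  simp only [mem_range] at ha
  simp only [mem_Ico] at hb
  omega

-- P2
lemma aux_P2 (N k : ℕ) (hk : k < N) :
    ∏ j ∈ (range N).erase k, |(k:ℝ) - j| = (Nat.factorial k : ℝ) * (Nat.factorial (N-1-k) : ℝ) := by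
  rw [aux_erase_split _ N k hk]
  have h1 : ∏ j ∈ range k, |(k:ℝ) - j| = (Nat.factorial k : ℝ) := by
    have : ∀ j ∈ range k, |(k:ℝ) - j| = ((k - j : ℕ) : ℝ) := by
      intro j hj
      simp only [mem_range] at hj
      rw [Nat.cast_sub hj.le, abs_of_nonneg]
      have : (j:ℝ) < k := by exact_mod_cast hj
      linarith
    rw [Finset.prod_congr rfl this, ← Nat.cast_prod]
    congr 1
    have := Finset.prod_range_reflect (fun j => j + 1) k
    rw [← Finset.prod_range_add_one_eq_factorial k, ← this]
    apply Finset.prod_congr rfl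
    intro j hj
    simp only [mem_range] at hj
    omega
  have h2 : ∏ j ∈ Ico (k+1) N, |(k:ℝ) - j| = (Nat.factorial (N-1-k) : ℝ) := by
    have : ∀ j ∈ Ico (k+1) N, |(k:ℝ) - j| = ((j - k : ℕ) : ℝ) := by
      intro j hj
      simp only [mem_Ico] at hj
      rw [Nat.cast_sub (by omega), abs_of_nonpos]
      · ring
      have : (k:ℝ) < j := by exact_mod_cast (by omega : k < j)
      linarith
    rw [Finset.prod_congr rfl this, ← Nat.cast_prod]
    congr 1
    rw [Finset.prod_Ico_eq_prod_range, ← Finset.prod_range_add_one_eq_factorial (N-1-k)]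
    have hcard : N - (k+1) = N - 1 - k := by omega
    rw [hcard]
    apply Finset.prod_congr rfl
    intro j hj
    omega
  rw [h1, h2]

-- asc factorial as prod
lemma aux_asc (a M : ℕ) : (∏ j ∈ range M, (a+j)) = a.ascFactorial M := by
  induction M with
  | zero => simp
  | succ m ih => rw [Finset.prod_range_succ, ih, Nat.ascFactorial_succ]; ring

-- P1
lemma aux_P1 (N k : ℕ) (hk : k < N) :
    ((k:ℝ)+1) * ∏ j ∈ (range N).erase k, ((j:ℝ)+1) = (Nat.factorial N : ℝ) := by
  have hmem : k ∈ range N := mem_range.mpr hk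
  have := Finset.mul_prod_erase (range N) (fun j => ((j:ℝ)+1)) hmem
  rw [this, ← Finset.prod_range_add_one_eq_factorial N]
  push_cast
  rfl
-- P3 : (k+1)! * ((2*(k+1)) * ∏_{erase} (k+j+2)) = (N+k+1)!
lemma aux_P3 (N k : ℕ) (hk : k < N) :
    ((Nat.factorial (k+1) : ℝ)) * ((2*((k:ℝ)+1)) * ∏ j ∈ (range N).erase k, ((k:ℝ)+j+2)) 
      = (Nat.factorial (N+k+1) : ℝ) := by
  have hmem : k ∈ range N := mem_range.mpr hk
  have h := Finset.mul_prod_erase (range N) (fun j => ((k:ℝ)+j+2)) hmem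
  have h2 : (2*((k:ℝ)+1)) * ∏ j ∈ (range N).erase k, ((k:ℝ)+j+2) 
      = ∏ j ∈ range N, ((k:ℝ)+j+2) := by
    rw [← h]; ring
  rw [h2]
  have h3 : ∏ j ∈ range N, ((k:ℝ)+j+2) = (((k+2).ascFactorial N : ℕ) : ℝ) := by
    rw [← aux_asc (k+2) N, Nat.cast_prod]
    apply Finset.prod_congr rfl
    intro j hj
    push_cast
    ring
  rw [h3, ← Nat.cast_mul, Nat.factorial_mul_ascFactorial (k+1) N]
  congr 2
  omega

-- F1 : (N-m)! * ∏_{i∈range m} (N - i) = N!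
lemma aux_F1 (N m : ℕ) (hm : m ≤ N) :
    (Nat.factorial (N-m) : ℝ) * ∏ i ∈ range m, ((N:ℝ) - i) = (Nat.factorial N : ℝ) := by
  have h1 : ∏ i ∈ range m, ((N:ℝ) - i) = ((N.descFactorial m : ℕ) : ℝ) := by
    rw [Nat.descFactorial_eq_prod_range, Nat.cast_prod]
    apply Finset.prod_congr rfl
    intro i hi
    simp only [mem_range] at hi
    rw [Nat.cast_sub (by omega)]
  rw [h1, ← Nat.cast_mul, Nat.factorial_mul_descFactorial hm]

-- F2 : N! * ∏_{i∈range m} (N + 1 + i) = (N+m)!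
lemma aux_F2 (N m : ℕ) :
    (Nat.factorial N : ℝ) * ∏ i ∈ range m, ((N:ℝ) + 1 + i) = (Nat.factorial (N+m) : ℝ) := by
  have h1 : ∏ i ∈ range m, ((N:ℝ) + 1 + i) = (((N+1).ascFactorial m : ℕ) : ℝ) := by
    rw [← aux_asc (N+1) m, Nat.cast_prod]
    apply Finset.prod_congr rfl
    intro i hi
    push_cast; ring
  rw [h1, ← Nat.cast_mul, Nat.factorial_mul_ascFactorial N m]

lemma aux_prod_identity (N k : ℕ) (hk : k < N) :
    ∏ j ∈ (range N).erase k, (((j:ℝ)+1)^2 / ((((k:ℝ)+j+2))*|(k:ℝ) - j|))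
      = 2 * ∏ i ∈ range (k+1), (((N:ℝ) - i)/((N:ℝ)+1+i)) := by
  have hE1 := aux_P1 N k hk
  have hE2 := aux_P3 N k hk
  have hE3 := aux_P2 N k hk
  have hF1 := aux_F1 N (k+1) hk
  have hF2 := aux_F2 N (k+1)
  set E1 := ∏ j ∈ (range N).erase k, ((j:ℝ)+1) with hE1d
  set E2 := ∏ j ∈ (range N).erase k, ((k:ℝ)+j+2) with hE2d
  set E3 := ∏ j ∈ (range N).erase k, |(k:ℝ) - j| with hE3d
  set F1 := ∏ i ∈ range (k+1), ((N:ℝ) - i) with hF1d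
  set F2 := ∏ i ∈ range (k+1), ((N:ℝ)+1+i) with hF2d
  have hLHS : ∏ j ∈ (range N).erase k, (((j:ℝ)+1)^2 / ((((k:ℝ)+j+2))*|(k:ℝ) - j|))
      = E1^2 / (E2 * E3) := by
    rw [Finset.prod_div_distrib, Finset.prod_mul_distrib, Finset.prod_pow]
  have hRHS : ∏ i ∈ range (k+1), (((N:ℝ) - i)/((N:ℝ)+1+i)) = F1 / F2 := by
    rw [Finset.prod_div_distrib]
  rw [hLHS, hRHS]
  -- nonzeroness
  have hE2pos : 0 < E2 := Finset.prod_pos (by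
    intro j hj; have := Finset.mem_range.mp (Finset.mem_of_mem_erase hj); positivity)
  have hE3pos : 0 < E3 := Finset.prod_pos (by
    intro j hj
    rw [Finset.mem_erase] at hj
    rw [abs_pos, sub_ne_zero]
    exact_mod_cast fun hc => hj.1 (by exact_mod_cast hc.symm))
  have hF2pos : 0 < F2 := Finset.prod_pos (by intro i hi; positivity)
  have hkpos : (0:ℝ) < (k:ℝ) + 1 := by positivity
  have hNfac : (0:ℝ) < (Nat.factorial N : ℝ) := by exact_mod_cast (Nat.factorial_pos N)
  have hkfac : (0:ℝ) < (Nat.factorial k : ℝ) := by exact_mod_cast (Nat.factorial_pos k)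
  have hk1fac : (0:ℝ) < (Nat.factorial (k+1) : ℝ) := by exact_mod_cast (Nat.factorial_pos (k+1))
  have hNkfac : (0:ℝ) < (Nat.factorial (N+k+1) : ℝ) := by exact_mod_cast (Nat.factorial_pos (N+k+1))
  have hmfac : (0:ℝ) < (Nat.factorial (N-1-k) : ℝ) := by exact_mod_cast (Nat.factorial_pos (N-1-k))
  -- express values
  have hv1 : E1 = (Nat.factorial N : ℝ) / ((k:ℝ)+1) := by
    field_simp at hE1 ⊢; linarith [hE1]
  have hv2 : E2 = (Nat.factorial (N+k+1) : ℝ) / ((Nat.factorial (k+1) : ℝ) * (2*((k:ℝ)+1))) := by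
    rw [eq_div_iff (by positivity)]
    linarith [hE2]
  have hv3 : F1 = (Nat.factorial N : ℝ) / (Nat.factorial (N-1-k) : ℝ) := by
    have : N - (k+1) = N - 1 - k := by omega
    rw [this] at hF1
    rw [eq_div_iff (by positivity)]
    linarith [hF1]
  have hv4 : F2 = (Nat.factorial (N+k+1) : ℝ) / (Nat.factorial N : ℝ) := by
    have : N + (k+1) = N + k + 1 := by omega
    rw [this] at hF2
    rw [eq_div_iff (by positivity)]
    linarith [hF2]
  have hfs : (Nat.factorial (k+1) : ℝ) = ((k:ℝ)+1) * (Nat.factorial k : ℝ) := by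
    rw [Nat.factorial_succ]; push_cast; ring
  rw [hv1, hv2, hv3, hv4, hE3, hfs]
  field_simp

lemma aux_sum_odd (m : ℕ) : (∑ i ∈ range m, (2*(i:ℝ)+1)) = (m:ℝ)^2 := by
  induction m with
  | zero => simp
  | succ n ih => rw [Finset.sum_range_succ, ih]; push_cast; ring

lemma aux_ratio_le (N i : ℕ) (hi : i < N) :
    ((N:ℝ) - i)/((N:ℝ)+1+i) ≤ Real.exp (-(2*(2*(i:ℝ)+1)/(2*(N:ℝ)+1))) := by
  have hiN : (i:ℝ) < (N:ℝ) := by exact_mod_cast hi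
  have hden : (0:ℝ) < 2*(N:ℝ)+1 := by positivity
  have hx0 : (0:ℝ) ≤ (2*(i:ℝ)+1)/(2*(N:ℝ)+1) := by positivity
  have hkey := aux_key_ineq hx0
  have hE : (0:ℝ) < Real.exp (2*((2*(i:ℝ)+1)/(2*(N:ℝ)+1))) := Real.exp_pos _
  have key2 : (2*((N:ℝ)-i)) * Real.exp (2*((2*(i:ℝ)+1)/(2*(N:ℝ)+1))) ≤ 2*((N:ℝ)+1+i) := by
    have h1 : 1 - (2*(i:ℝ)+1)/(2*(N:ℝ)+1) = 2*((N:ℝ)-i)/(2*(N:ℝ)+1) := by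
      field_simp; ring
    have h2 : 1 + (2*(i:ℝ)+1)/(2*(N:ℝ)+1) = 2*((N:ℝ)+1+i)/(2*(N:ℝ)+1) := by
      field_simp; ring
    rw [h1, h2, div_mul_eq_mul_div, div_le_div_iff₀ hden hden] at hkey
    exact (mul_le_mul_iff_of_pos_right hden).mp hkey
  have harg : -(2*(2*(i:ℝ)+1)/(2*(N:ℝ)+1)) = -(2*((2*(i:ℝ)+1)/(2*(N:ℝ)+1))) := by ring
  rw [harg, div_le_iff₀ (by positivity), Real.exp_neg, ← div_eq_inv_mul, le_div_iff₀ hE]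
  linarith [key2]

lemma aux_R_le (N m : ℕ) (hm : m ≤ N) :
    ∏ i ∈ range m, (((N:ℝ) - i)/((N:ℝ)+1+i)) ≤ Real.exp (-(2*(m:ℝ)^2/(2*(N:ℝ)+1))) := by
  calc ∏ i ∈ range m, (((N:ℝ) - i)/((N:ℝ)+1+i)) 
      ≤ ∏ i ∈ range m, Real.exp (-(2*(2*(i:ℝ)+1)/(2*(N:ℝ)+1))) := by
        apply Finset.prod_le_prod
        · intro i hi
          simp only [mem_range] at hi
          have h1 : (i:ℝ) < N := by exact_mod_cast lt_of_lt_of_le hi hm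
          have h2 : (0:ℝ) < (N:ℝ)+1+i := by positivity
          have : (0:ℝ) ≤ (N:ℝ) - i := by linarith
          positivity
        · intro i hi
          simp only [mem_range] at hi
          exact aux_ratio_le N i (lt_of_lt_of_le hi hm)
    _ = Real.exp (∑ i ∈ range m, -(2*(2*(i:ℝ)+1)/(2*(N:ℝ)+1))) := by
        rw [Real.exp_sum]
    _ = Real.exp (-(2*(m:ℝ)^2/(2*(N:ℝ)+1))) := by
        congr 1
        have hc : ∀ i ∈ range m, -(2*(2*(i:ℝ)+1)/(2*(N:ℝ)+1)) 
            = (2*(i:ℝ)+1) * (-(2/(2*(N:ℝ)+1))) := by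
          intro i _; ring
        rw [Finset.sum_congr rfl hc, ← Finset.sum_mul, aux_sum_odd]
        ring

lemma aux_degree_lt (p : Polynomial ℝ) (N : ℕ) (hN : 0 < N)
    (h : ∀ s : ℝ, 0 < s → |p.eval s| ≤ (1 + s) ^ N / s) :
    p.degree < (N : ℕ) := by
  by_contra hcon
  push_neg at hcon
  have hp0 : p ≠ 0 := by
    intro h0
    rw [h0, Polynomial.degree_zero] at hcon
    exact (not_le.mpr (WithBot.bot_lt_coe N)) hcon
  have hd : N ≤ p.natDegree := by
    have := Polynomial.degree_eq_natDegree hp0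
    rw [this] at hcon
    exact_mod_cast hcon
  set G : Polynomial ℝ := X^2 * p^2 - Polynomial.C ((4:ℝ)^N) * X^(2*N) with hG
  have hdeg1 : (X^2 * p^2 : Polynomial ℝ).degree = ((2 * p.natDegree + 2 : ℕ) : WithBot ℕ) := by
    rw [Polynomial.degree_mul, Polynomial.degree_pow, Polynomial.degree_pow,
      Polynomial.degree_X, Polynomial.degree_eq_natDegree hp0]
    push_cast
    ring
  have hdeg2 : (Polynomial.C ((4:ℝ)^N) * X^(2*N) : Polynomial ℝ).degree = ((2*N : ℕ) : WithBot ℕ) := by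
    rw [Polynomial.degree_C_mul (by positivity), Polynomial.degree_X_pow]
  have hlt : (Polynomial.C ((4:ℝ)^N) * X^(2*N) : Polynomial ℝ).degree < (X^2 * p^2 : Polynomial ℝ).degree := by
    rw [hdeg1, hdeg2]
    exact_mod_cast (by omega : 2*N < 2 * p.natDegree + 2)
  have hdegG : G.degree = ((2 * p.natDegree + 2 : ℕ) : WithBot ℕ) := by
    rw [hG, Polynomial.degree_sub_eq_left_of_degree_lt hlt, hdeg1]
  have hlcG : G.leadingCoeff = p.leadingCoeff ^ 2 := by
    rw [hG, Polynomial.leadingCoeff_sub_of_degree_lt hlt]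
    rw [Polynomial.leadingCoeff_mul, Polynomial.leadingCoeff_pow, Polynomial.leadingCoeff_pow,
      Polynomial.leadingCoeff_X]
    simp
  have htend : Tendsto (fun x => G.eval x) atTop atTop := by
    apply Polynomial.tendsto_atTop_of_leadingCoeff_nonneg
    · rw [hdegG]; exact_mod_cast (by omega : 0 < 2 * p.natDegree + 2)
    · rw [hlcG]; positivity
  have hev : ∀ᶠ s in atTop, 0 < G.eval s := htend.eventually_gt_atTop 0
  have hge : ∀ᶠ s : ℝ in atTop, (1:ℝ) ≤ s := eventually_ge_atTop 1
  obtain ⟨s, hGs, hs1⟩ := (hev.and hge).exists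
  have hs0 : (0:ℝ) < s := lt_of_lt_of_le one_pos hs1
  have hb := h s hs0
  have hGeval : G.eval s = s^2 * (p.eval s)^2 - 4^N * s^(2*N) := by
    simp [hG]
  have h1 : |p.eval s| * s ≤ (1 + s)^N := by
    rw [div_eq_mul_inv] at hb
    calc |p.eval s| * s ≤ ((1+s)^N * s⁻¹) * s := by
          apply mul_le_mul_of_nonneg_right hb hs0.le
      _ = (1+s)^N := by field_simp
  have h2 : (1 + s)^N ≤ (2*s)^N := by
    apply pow_le_pow_left₀ (by linarith) (by linarith)
  have h3 : s^2 * (p.eval s)^2 ≤ 4^N * s^(2*N) := by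
    have := mul_le_mul h1 h1 (by positivity) (by positivity)
    calc s^2 * (p.eval s)^2 = (|p.eval s| * s)^2 := by
          rw [mul_pow, sq_abs]; ring
      _ ≤ ((2*s)^N)^2 := by
          apply pow_le_pow_left₀ (by positivity) (h1.trans h2)
      _ = 4^N * s^(2*N) := by
          rw [mul_pow, mul_pow, ← pow_mul, ← pow_mul, mul_comm N 2,
            show (2:ℝ)^(2*N) = ((2:ℝ)^2)^N by rw [pow_mul], show ((2:ℝ)^2 = 4) by norm_num]
  rw [hGeval] at hGs
  linarith

lemma aux_sum_sq (n : ℕ) : ∑ k ∈ range n, (1:ℝ)/((k:ℝ)+1)^2 ≤ 2 := by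
  have H : ∀ m : ℕ, ∑ k ∈ range (m+1), (1:ℝ)/((k:ℝ)+1)^2 ≤ 2 - 1/((m:ℝ)+1) := by
    intro m
    induction m with
    | zero => norm_num
    | succ m ih =>
      rw [Finset.sum_range_succ]
      have h1 : (0:ℝ) < (m:ℝ)+1 := by positivity
      have h2 : (0:ℝ) < (m:ℝ)+2 := by positivity
      have key : (1:ℝ)/(((m+1:ℕ):ℝ)+1)^2 ≤ 1/((m:ℝ)+1) - 1/((m:ℝ)+2) := by
        have e1 : (1:ℝ)/((m:ℝ)+1) - 1/((m:ℝ)+2) = 1/(((m:ℝ)+1)*((m:ℝ)+2)) := by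
          field_simp
          norm_num
        push_cast
        rw [e1, show ((m:ℝ)+1+1) = (m:ℝ)+2 by ring]
        apply one_div_le_one_div_of_le (by positivity)
        nlinarith
      have e2 : ((m+1:ℕ):ℝ)+1 = (m:ℝ)+2 := by push_cast; ring
      rw [e2] at key ⊢
      linarith [ih]
  cases n with
  | zero => simp
  | succ m =>
    have := H m
    have h1 : (0:ℝ) < (m:ℝ)+1 := by positivity
    have : (1:ℝ)/((m:ℝ)+1) > 0 := by positivity
    linarith [H m]

lemma aux_term (N k : ℕ) (hN : 0 < N) (hk : k < N) :
    (1 + (((k:ℝ)+1)/(N:ℝ))^2)^N / ((((k:ℝ)+1)/(N:ℝ))^2)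
      * ∏ j ∈ (range N).erase k, (((j:ℝ)+1)^2 / ((((k:ℝ)+j+2))*|(k:ℝ) - j|))
    ≤ 2 * Real.exp 2⁻¹ * (N:ℝ)^2 / ((k:ℝ)+1)^2 := by
  have hNr : (0:ℝ) < N := by exact_mod_cast hN
  have hkr : (0:ℝ) < (k:ℝ)+1 := by positivity
  have hk1N : (k:ℝ)+1 ≤ N := by exact_mod_cast hk
  set w : ℝ := (((k:ℝ)+1)/(N:ℝ))^2 with hw
  have hwpos : 0 < w := by positivity
  rw [aux_prod_identity N k hk]
  have hA : (1 + w)^N ≤ Real.exp (((k:ℝ)+1)^2/(N:ℝ)) := by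
    have h1 : 1 + w ≤ Real.exp w := by linarith [Real.add_one_le_exp w]
    calc (1 + w)^N ≤ (Real.exp w)^N := pow_le_pow_left₀ (by positivity) h1 N
      _ = Real.exp ((N:ℕ) * w) := (Real.exp_nat_mul w N).symm
      _ = Real.exp (((k:ℝ)+1)^2/(N:ℝ)) := by
          congr 1
          rw [hw]
          field_simp
  have hR := aux_R_le N (k+1) (by omega)
  have hRcast : ∏ i ∈ range (k+1), (((N:ℝ) - i)/((N:ℝ)+1+i))
      ≤ Real.exp (-(2*((k:ℝ)+1)^2/(2*(N:ℝ)+1))) := by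
    convert hR using 3
    push_cast
    ring
  have hRnn : 0 ≤ ∏ i ∈ range (k+1), (((N:ℝ) - i)/((N:ℝ)+1+i)) := by
    apply Finset.prod_nonneg
    intro i hi
    simp only [mem_range] at hi
    have : (i:ℝ) < N := by exact_mod_cast (by omega : i < N)
    have h2 : (0:ℝ) < (N:ℝ)+1+i := by positivity
    have h3 : (0:ℝ) ≤ (N:ℝ) - i := by linarith
    positivity
  have hcomb : (1 + w)^N * ∏ i ∈ range (k+1), (((N:ℝ) - i)/((N:ℝ)+1+i))
      ≤ Real.exp 2⁻¹ := by
    calc (1 + w)^N * ∏ i ∈ range (k+1), (((N:ℝ) - i)/((N:ℝ)+1+i))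
        ≤ Real.exp (((k:ℝ)+1)^2/(N:ℝ)) * Real.exp (-(2*((k:ℝ)+1)^2/(2*(N:ℝ)+1))) := by
          apply mul_le_mul hA hRcast hRnn (Real.exp_nonneg _)
      _ = Real.exp (((k:ℝ)+1)^2/(N:ℝ) - 2*((k:ℝ)+1)^2/(2*(N:ℝ)+1)) := by
          rw [← Real.exp_add]; ring_nf
      _ ≤ Real.exp 2⁻¹ := by
          apply Real.exp_le_exp.mpr
          have he : ((k:ℝ)+1)^2/(N:ℝ) - 2*((k:ℝ)+1)^2/(2*(N:ℝ)+1)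
              = ((k:ℝ)+1)^2/((N:ℝ)*(2*(N:ℝ)+1)) := by
            field_simp
            ring
          rw [he, div_le_iff₀ (by positivity)]
          nlinarith [hk1N, hNr]
  calc (1 + w)^N / w * (2 * ∏ i ∈ range (k+1), (((N:ℝ) - i)/((N:ℝ)+1+i)))
      = 2 * ((1 + w)^N * ∏ i ∈ range (k+1), (((N:ℝ) - i)/((N:ℝ)+1+i))) * w⁻¹ := by
        field_simp
    _ ≤ 2 * Real.exp 2⁻¹ * w⁻¹ := by
        apply mul_le_mul_of_nonneg_right _ (by positivity)
        linarith [hcomb]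
    _ = 2 * Real.exp 2⁻¹ * (N:ℝ)^2 / ((k:ℝ)+1)^2 := by
        rw [hw]
        field_simp

/-- If a real polynomial `p` satisfies `|p(s)| ≤ (1+s)^N / s` for all `s > 0`,
where `N` is a positive integer, then `|p(0)| ≤ e² N²`. -/
theorem polynomial_value_at_zero_bound (p : Polynomial ℝ) (N : ℕ) (hN : 0 < N)
    (h : ∀ s : ℝ, 0 < s → |p.eval s| ≤ (1 + s) ^ N / s) :
    |p.eval 0| ≤ Real.exp 1 ^ 2 * (N : ℝ) ^ 2 := by
  have hNr : (0:ℝ) < N := by exact_mod_cast hN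
  have hdeg := aux_degree_lt p N hN h
  set v : ℕ → ℝ := fun k => (((k:ℝ)+1)/(N:ℝ))^2 with hvdef
  have hvpos : ∀ k : ℕ, 0 < v k := by
    intro k
    simp only [hvdef]
    positivity
  have hinj : Set.InjOn v (range N) := by
    intro a _ b _ hab
    simp only [hvdef] at hab
    have ha' : (0:ℝ) < ((a:ℝ)+1)/N := by positivity
    have hb' : (0:ℝ) < ((b:ℝ)+1)/N := by positivity
    have h1 : ((a:ℝ)+1)/N = ((b:ℝ)+1)/N := by nlinarith [hab]
    field_simp at h1
    exact_mod_cast (add_right_cancel h1)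
  have hint := Lagrange.eq_interpolate hinj (by rw [Finset.card_range]; exact hdeg)
  have h0 : p.eval 0 = ∑ k ∈ range N, p.eval (v k) * (Lagrange.basis (range N) v k).eval 0 := by
    conv_lhs => rw [hint]
    rw [Lagrange.interpolate_apply, Polynomial.eval_finset_sum]
    apply Finset.sum_congr rfl
    intro k _
    rw [Polynomial.eval_mul, Polynomial.eval_C]
  have hbasis : ∀ k ∈ range N, |(Lagrange.basis (range N) v k).eval 0|
      = ∏ j ∈ (range N).erase k, (v j / |v k - v j|) := by
    intro k _
    rw [Lagrange.basis, Polynomial.eval_prod, Finset.abs_prod]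
    apply Finset.prod_congr rfl
    intro j _
    rw [Lagrange.basisDivisor, Polynomial.eval_mul, Polynomial.eval_C, Polynomial.eval_sub,
      Polynomial.eval_X, Polynomial.eval_C]
    rw [abs_mul, abs_inv, zero_sub, abs_neg, abs_of_pos (hvpos j)]
    rw [div_eq_mul_inv, mul_comm]
  have hconv : ∀ k ∈ range N, ∀ j ∈ (range N).erase k,
      v j / |v k - v j| = ((j:ℝ)+1)^2 / ((((k:ℝ)+j+2))*|(k:ℝ) - j|) := by
    intro k _ j hj
    have hjk : j ≠ k := (Finset.mem_erase.mp hj).1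
    have hjkr : (k:ℝ) - j ≠ 0 := by
      rw [sub_ne_zero]
      exact_mod_cast fun hc => hjk (by exact_mod_cast hc.symm)
    have h1 : v k - v j = (((k:ℝ)-j)*((k:ℝ)+j+2))/(N:ℝ)^2 := by
      simp only [hvdef]
      field_simp
      ring
    have h2 : |v k - v j| = |(k:ℝ)-j| * ((k:ℝ)+j+2) / (N:ℝ)^2 := by
      rw [h1, abs_div, abs_mul, abs_of_pos (show (0:ℝ) < (k:ℝ)+j+2 by positivity),
        abs_of_pos (show (0:ℝ) < (N:ℝ)^2 by positivity)]
    have habs : |(k:ℝ)-(j:ℝ)| ≠ 0 := abs_ne_zero.mpr hjkr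
    rw [h2]
    simp only [hvdef]
    rw [div_pow]
    rw [div_div_div_cancel_right₀]
    · field_simp
    · positivity
  -- main chain
  have hstep1 : |p.eval 0| ≤ ∑ k ∈ range N, |p.eval (v k)|
      * ∏ j ∈ (range N).erase k, (v j / |v k - v j|) := by
    rw [h0]
    refine (Finset.abs_sum_le_sum_abs _ _).trans ?_
    apply Finset.sum_le_sum
    intro k hk
    rw [abs_mul, hbasis k hk]
  have hstep2 : ∀ k ∈ range N, |p.eval (v k)|
      * ∏ j ∈ (range N).erase k, (v j / |v k - v j|)
      ≤ 2 * Real.exp 2⁻¹ * (N:ℝ)^2 / ((k:ℝ)+1)^2 := by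
    intro k hk
    have hkN : k < N := Finset.mem_range.mp hk
    have hprodnn : 0 ≤ ∏ j ∈ (range N).erase k, (v j / |v k - v j|) := by
      apply Finset.prod_nonneg
      intro j _
      positivity
    have hb1 : |p.eval (v k)| ≤ (1 + v k)^N / v k := h (v k) (hvpos k)
    have hchain : |p.eval (v k)| * ∏ j ∈ (range N).erase k, (v j / |v k - v j|)
        ≤ ((1 + v k)^N / v k) * ∏ j ∈ (range N).erase k, (v j / |v k - v j|) :=
      mul_le_mul_of_nonneg_right hb1 hprodnn
    refine hchain.trans ?_
    rw [Finset.prod_congr rfl (hconv k hk)]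
    exact aux_term N k hN hkN
  have hstep3 : ∑ k ∈ range N, (2 * Real.exp 2⁻¹ * (N:ℝ)^2 / ((k:ℝ)+1)^2)
      ≤ 4 * Real.exp 2⁻¹ * (N:ℝ)^2 := by
    have e1 : ∀ k ∈ range N, 2 * Real.exp 2⁻¹ * (N:ℝ)^2 / ((k:ℝ)+1)^2
        = (2 * Real.exp 2⁻¹ * (N:ℝ)^2) * (1/((k:ℝ)+1)^2) := by
      intro k _
      ring
    rw [Finset.sum_congr rfl e1, ← Finset.mul_sum]
    have := aux_sum_sq N
    have hc : (0:ℝ) ≤ 2 * Real.exp 2⁻¹ * (N:ℝ)^2 := by positivity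
    nlinarith [this, hc]
  have hfinal : 4 * Real.exp 2⁻¹ * (N:ℝ)^2 ≤ Real.exp 1 ^ 2 * (N:ℝ)^2 := by
    have h4 : (4:ℝ) ≤ Real.exp (3/2 : ℝ) := by
      have ha := Real.add_one_le_exp (2⁻¹ : ℝ)
      have hb := Real.exp_one_gt_d9.le
      calc (4:ℝ) ≤ 2.7182818283 * (1 + 2⁻¹) := by norm_num
        _ ≤ Real.exp 1 * Real.exp 2⁻¹ := by
            apply mul_le_mul hb (by linarith) (by norm_num) (Real.exp_nonneg _)
        _ = Real.exp (3/2 : ℝ) := by rw [← Real.exp_add]; norm_num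
    have h5 : 4 * Real.exp 2⁻¹ ≤ Real.exp (3/2 : ℝ) * Real.exp 2⁻¹ :=
      mul_le_mul_of_nonneg_right h4 (Real.exp_nonneg _)
    have h6 : Real.exp (3/2 : ℝ) * Real.exp 2⁻¹ = Real.exp 1 ^ 2 := by
      rw [← Real.exp_add, pow_two, ← Real.exp_add]
      norm_num
    apply mul_le_mul_of_nonneg_right _ (by positivity : (0:ℝ) ≤ (N:ℝ)^2)
    linarith [h5, h6.le]
  calc |p.eval 0| ≤ ∑ k ∈ range N, |p.eval (v k)|
      * ∏ j ∈ (range N).erase k, (v j / |v k - v j|) := hstep1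
    _ ≤ ∑ k ∈ range N, (2 * Real.exp 2⁻¹ * (N:ℝ)^2 / ((k:ℝ)+1)^2) :=
        Finset.sum_le_sum hstep2
    _ ≤ 4 * Real.exp 2⁻¹ * (N:ℝ)^2 := hstep3
    _ ≤ Real.exp 1 ^ 2 * (N : ℝ) ^ 2 := hfinal
end

section
/- Let A be a positive semidefinite symmetric d×d real matrix, let ρ_A(x) = |A^{1/2} x|_{ℝ^d} for x ∈ ℝ^d, and for a set Ω ⊆ ℝ^d let ρ_A(Ω) = sup_{x∈Ω} ρ_A(x). Then for every integrable f : I → ℝ^d on an interval I, d^{-1} ⟨ρ_A(f)⟩_I ≤ ρ_A(⟪f⟫_I) ≤ ⟨ρ_A(f)⟩_I, where ⟨ρ_A(f)⟩_I = |I|^{-1} ∫_I |A^{1/2} f(y)|_{ℝ^d} dy. -/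
open MeasureTheory Set
open scoped ENNReal Matrix Pointwise Classical

noncomputable section

/-- The unit interval `I₀ = [0,1)`. -/
def I0 : Set ℝ := Set.Ico (0 : ℝ) 1

/-- The dyadic interval `[k/2^n, (k+1)/2^n)`. -/
def dyad (n k : ℕ) : Set ℝ := Set.Ico ((k : ℝ) / 2 ^ n) (((k : ℝ) + 1) / 2 ^ n)

/-- Real `d × d` matrices. -/
abbrev Mat (d : ℕ) := Matrix (Fin d) (Fin d) ℝ

/-- The Euclidean norm `|v|_{ℝ^d}`. -/
def enorm2 {d : ℕ} (v : Fin d → ℝ) : ℝ := Real.sqrt (∑ i, v i ^ 2)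

/-- The Euclidean inner product `⟨v, w⟩_{ℝ^d}`. -/
def dotp {d : ℕ} (v w : Fin d → ℝ) : ℝ := ∑ i, v i * w i

open scoped Classical in
/-- The positive semidefinite square root of a positive semidefinite matrix
(junk value `0` if the matrix is not positive semidefinite). -/
def matSqrt {d : ℕ} (A : Mat d) : Mat d := if h : A.PosSemidef then
  (h.1.eigenvectorUnitary : Mat d) * Matrix.diagonal ((↑) ∘ (Real.sqrt ∘ h.1.eigenvalues)) *
    (star h.1.eigenvectorUnitary : Mat d) else 0

/-- Order in the sense of quadratic forms: `A ⩽ B` iff `B - A` is positive semidefinite. -/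
def matLE {d : ℕ} (A B : Mat d) : Prop := (B - A).PosSemidef

/-- The average `⟨g⟩_I = |I|⁻¹ ∫_I g` of a (scalar- or vector-valued) function. -/
def avgOn {E : Type*} [NormedAddCommGroup E] [NormedSpace ℝ E] (I : Set ℝ) (g : ℝ → E) : E :=
  (volume I).toReal⁻¹ • ∫ x in I, g x

/-- The entrywise average `⟨W⟩_I` of a matrix-valued function. -/
def avgMat {d : ℕ} (I : Set ℝ) (W : ℝ → Mat d) : Mat d :=
  Matrix.of fun i j => avgOn I fun x => W x i j

/-- A matrix weight on `I₀`: an integrable function with symmetric values,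
positive definite a.e. on `I₀`. -/
structure IsMatrixWeight (d : ℕ) (W : ℝ → Mat d) : Prop where
  intOn : ∀ i j, IntegrableOn (fun x => W x i j) I0
  symm : ∀ x, (W x).IsSymm
  posdef : ∀ᵐ x ∂(volume.restrict I0), (W x).PosDef

/-- Membership in `L²_W(ℝ^d)`. -/
def MemL2W {d : ℕ} (W : ℝ → Mat d) (f : ℝ → Fin d → ℝ) : Prop :=
  Measurable f ∧ IntegrableOn (fun x => dotp (W x *ᵥ f x) (f x)) I0

/-- The squared norm `‖f‖²_{L²_W} = ∫_{I₀} ⟨W(x) f(x), f(x)⟩ dx`. -/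
def l2normSq {d : ℕ} (W : ℝ → Mat d) (f : ℝ → Fin d → ℝ) : ℝ :=
  ∫ x in I0, dotp (W x *ᵥ f x) (f x)

/-- The average `⟨φ W f⟩_I = |I|⁻¹ ∫_I φ(y) W(y) f(y) dy`. -/
def avgPhiWf {d : ℕ} (I : Set ℝ) (φ : ℝ → ℝ) (W : ℝ → Mat d) (f : ℝ → Fin d → ℝ) :
    Fin d → ℝ :=
  avgOn I fun y => φ y • (W y *ᵥ f y)

/-- Admissible functions `φ : I → [-1,1]`, measurable. -/
def Adm (I : Set ℝ) (φ : ℝ → ℝ) : Prop :=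
  Measurable φ ∧ ∀ y ∈ I, φ y ∈ Set.Icc (-1 : ℝ) 1

/-- The convex body average `⟪f⟫_I = { ⟨φ f⟩_I : φ : I → [-1,1] measurable }`. -/
def cbAvg {d : ℕ} (I : Set ℝ) (f : ℝ → Fin d → ℝ) : Set (Fin d → ℝ) :=
  {v | ∃ φ : ℝ → ℝ, Adm I φ ∧ v = avgOn I fun y => φ y • f y}

namespace CbAux
variable {d : ℕ}

def toEuc (d : ℕ) : (Fin d → ℝ) ≃ₗ[ℝ] EuclideanSpace ℝ (Fin d) :=
  (WithLp.linearEquiv 2 ℝ (Fin d → ℝ)).symm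

def LB (B : Mat d) : (Fin d → ℝ) →L[ℝ] EuclideanSpace ℝ (Fin d) :=
  LinearMap.toContinuousLinearMap ((toEuc d).toLinearMap ∘ₗ B.mulVecLin)

lemma LB_apply (B : Mat d) (v : Fin d → ℝ) : LB B v = toEuc d (B *ᵥ v) := rfl

lemma enorm2_eq (v : Fin d → ℝ) : enorm2 v = ‖toEuc d v‖ := by
  rw [EuclideanSpace.norm_eq]
  unfold enorm2
  congr 1
  refine Finset.sum_congr rfl fun i _ => ?_
  rw [Real.norm_eq_abs, sq_abs]
  rfl

lemma enorm2_LB (B : Mat d) (v : Fin d → ℝ) : enorm2 (B *ᵥ v) = ‖LB B v‖ := by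
  rw [enorm2_eq, LB_apply]

lemma enorm2_nonneg (v : Fin d → ℝ) : 0 ≤ enorm2 v := Real.sqrt_nonneg _

lemma abs_coord_le_enorm2 (v : Fin d → ℝ) (i : Fin d) : |v i| ≤ enorm2 v := by
  rw [← Real.sqrt_sq_eq_abs]
  exact Real.sqrt_le_sqrt (Finset.single_le_sum (f := fun j => v j ^ 2)
    (fun j _ => sq_nonneg _) (Finset.mem_univ i))

lemma enorm2_le_sum_abs (v : Fin d → ℝ) : enorm2 v ≤ ∑ i, |v i| := by
  calc enorm2 v = Real.sqrt (∑ i, |v i| ^ 2) := by simp [enorm2, sq_abs]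
  _ ≤ Real.sqrt ((∑ i, |v i|) ^ 2) :=
      Real.sqrt_le_sqrt (Finset.sum_sq_le_sq_sum_of_nonneg (fun i _ => abs_nonneg _))
  _ = ∑ i, |v i| := Real.sqrt_sq (Finset.sum_nonneg fun i _ => abs_nonneg _)

end CbAux

open CbAux

/-- For a positive semidefinite symmetric `A` and `ρ_A(x) = |A^{1/2}x|`, the norm of the
convex body average satisfies `d⁻¹ ⟨ρ_A(f)⟩_I ≤ ρ_A(⟪f⟫_I) ≤ ⟨ρ_A(f)⟩_I`. -/
theorem cbAvg_norm_comparable {d : ℕ} (A : Mat d) (hA : A.PosSemidef)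
    (a b : ℝ) (hab : a < b) (f : ℝ → Fin d → ℝ) (hf : IntegrableOn f (Set.Ico a b)) :
    (d : ℝ)⁻¹ * avgOn (Set.Ico a b) (fun y => enorm2 (matSqrt A *ᵥ f y)) ≤
        sSup ((fun v => enorm2 (matSqrt A *ᵥ v)) '' cbAvg (Set.Ico a b) f) ∧
    sSup ((fun v => enorm2 (matSqrt A *ᵥ v)) '' cbAvg (Set.Ico a b) f) ≤
        avgOn (Set.Ico a b) (fun y => enorm2 (matSqrt A *ᵥ f y)) := by
  set I : Set ℝ := Set.Ico a b with hI
  set B : Mat d := matSqrt A with hB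
  set μ : Measure ℝ := volume.restrict I with hμ
  set c : ℝ := ((volume I).toReal)⁻¹ with hc
  have hc0 : 0 ≤ c := inv_nonneg.2 ENNReal.toReal_nonneg
  set S : Set ℝ := (fun v => enorm2 (B *ᵥ v)) '' cbAvg I f with hS
  have hfi : Integrable f μ := hf
  have hLf : Integrable (fun y => LB B (f y)) μ := (LB B).integrable_comp hfi
  have henf : Integrable (fun y => ‖LB B (f y)‖) μ := hLf.norm
  have hmemI : ∀ᵐ y ∂μ, y ∈ I := ae_restrict_mem measurableSet_Ico
  -- integrability of φ • f for admissible φ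
  have hφf : ∀ φ : ℝ → ℝ, Adm I φ → Integrable (fun y => φ y • f y) μ := by
    intro φ hφ
    refine hfi.norm.mono' (hφ.1.aestronglyMeasurable.smul hfi.aestronglyMeasurable) ?_
    filter_upwards [hmemI] with y hy
    rw [norm_smul]
    have h1 : |φ y| ≤ 1 := abs_le.2 ⟨(hφ.2 y hy).1, (hφ.2 y hy).2⟩
    calc ‖φ y‖ * ‖f y‖ ≤ 1 * ‖f y‖ := by
          exact mul_le_mul_of_nonneg_right h1 (norm_nonneg _)
      _ = ‖f y‖ := one_mul _
  -- average of enorm2 ∘ (B *ᵥ f ·)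
  have havg : avgOn I (fun y => enorm2 (B *ᵥ f y)) = c * ∫ y, ‖LB B (f y)‖ ∂μ := by
    rw [avgOn]
    congr 1
    exact integral_congr_ae (Filter.Eventually.of_forall fun y => enorm2_LB B (f y))
  -- upper bound
  have key_ub : ∀ x ∈ S, x ≤ avgOn I (fun y => enorm2 (B *ᵥ f y)) := by
    rintro x ⟨v, ⟨φ, hφ, rfl⟩, rfl⟩
    rw [havg]
    dsimp only
    rw [avgOn, enorm2_LB]
    rw [_root_.map_smul, ((LB B).integral_comp_comm (hφf φ hφ)).symm]
    rw [norm_smul, Real.norm_eq_abs, abs_of_nonneg hc0]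
    refine mul_le_mul_of_nonneg_left ?_ hc0
    refine le_trans (norm_integral_le_integral_norm _) ?_
    refine integral_mono_ae (((LB B).integrable_comp (hφf φ hφ)).norm) henf ?_
    filter_upwards [hmemI] with y hy
    rw [_root_.map_smul, norm_smul, Real.norm_eq_abs]
    have h1 : |φ y| ≤ 1 := abs_le.2 ⟨(hφ.2 y hy).1, (hφ.2 y hy).2⟩
    calc |φ y| * ‖LB B (f y)‖ ≤ 1 * ‖LB B (f y)‖ :=
          mul_le_mul_of_nonneg_right h1 (norm_nonneg _)
      _ = ‖LB B (f y)‖ := one_mul _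
  have hbdd : BddAbove S := ⟨_, key_ub⟩
  have h0S : (0 : ℝ) ∈ S := by
    refine ⟨avgOn I fun y => (fun _ : ℝ => (0:ℝ)) y • f y,
      ⟨fun _ => 0, ⟨measurable_const, fun y _ => by norm_num⟩, rfl⟩, ?_⟩
    simp [avgOn, enorm2, Matrix.mulVec_zero]
  have hSnn : 0 ≤ sSup S := le_csSup hbdd h0S
  -- component integrability
  have hfj : ∀ j, Integrable (fun y => f y j) μ := fun j => by
    simpa using (ContinuousLinearMap.proj (R := ℝ) (φ := fun _ : Fin d => ℝ) j).integrable_comp hfi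
  have hBfi : ∀ i, Integrable (fun y => (B *ᵥ f y) i) μ := by
    intro i
    have : Integrable (fun y => ∑ j, B i j * f y j) μ :=
      integrable_finset_sum _ fun j _ => (hfj j).const_mul _
    simpa [Matrix.mulVec, dotProduct] using this
  constructor
  · -- lower bound
    -- the sign functions
    set g : ℝ → Fin d → ℝ := hfi.aestronglyMeasurable.mk f with hgdef
    have hg : StronglyMeasurable g := hfi.aestronglyMeasurable.stronglyMeasurable_mk
    have hfg : f =ᵐ[μ] g := hfi.aestronglyMeasurable.ae_eq_mk
    have key_i : ∀ i : Fin d, c * ∫ y, |(B *ᵥ f y) i| ∂μ ≤ sSup S := by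
      intro i
      set φ : ℝ → ℝ := fun y => if 0 ≤ (B *ᵥ g y) i then 1 else -1 with hφdef
      have hmeas : Measurable fun y => (B *ᵥ g y) i := by
        have : (fun y => (B *ᵥ g y) i) = fun y => ∑ j, B i j * g y j := by
          funext y; simp [Matrix.mulVec, dotProduct]
        rw [this]
        exact Finset.measurable_sum _ fun j _ =>
          measurable_const.mul ((measurable_pi_apply j).comp hg.measurable)
      have hφm : Measurable φ :=
        Measurable.ite (measurableSet_le measurable_const hmeas) measurable_const measurable_const
      have hφadm : Adm I φ := ⟨hφm, fun y _ => by
        by_cases h : 0 ≤ (B *ᵥ g y) i <;> simp [hφdef, h] <;> norm_num⟩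
      have hmem : enorm2 (B *ᵥ avgOn I fun y => φ y • f y) ∈ S :=
        ⟨_, ⟨φ, hφadm, rfl⟩, rfl⟩
      refine le_trans ?_ (le_csSup hbdd hmem)
      set v : Fin d → ℝ := avgOn I fun y => φ y • f y with hv
      -- compute (B *ᵥ v) i
      have hint : Integrable (fun y => φ y • f y) μ := hφf φ hφadm
      have hwj : ∀ j, (∫ y, φ y • f y ∂μ) j = ∫ y, φ y * f y j ∂μ := by
        intro j
        have := (ContinuousLinearMap.proj (R := ℝ) (φ := fun _ : Fin d => ℝ) j).integral_comp_comm hint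
        simpa [smul_eq_mul] using this.symm
      have hcomp : ∀ j, Integrable (fun y => φ y * f y j) μ := by
        intro j
        have := (ContinuousLinearMap.proj (R := ℝ) (φ := fun _ : Fin d => ℝ) j).integrable_comp hint
        simpa [smul_eq_mul] using this
      have hBvi : (B *ᵥ v) i = c * ∫ y, |(B *ᵥ f y) i| ∂μ := by
        rw [hv, avgOn, Matrix.mulVec_smul, Pi.smul_apply, smul_eq_mul]
        congr 1
        calc (B *ᵥ ∫ y, φ y • f y ∂μ) i = ∑ j, B i j * (∫ y, φ y • f y ∂μ) j := rfl
          _ = ∑ j, ∫ y, B i j * (φ y * f y j) ∂μ := by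
              refine Finset.sum_congr rfl fun j _ => ?_
              rw [hwj j, integral_const_mul]
          _ = ∫ y, ∑ j, B i j * (φ y * f y j) ∂μ :=
              (integral_finset_sum _ fun j _ => (hcomp j).const_mul _).symm
          _ = ∫ y, φ y * (B *ᵥ f y) i ∂μ := by
              refine integral_congr_ae (Filter.Eventually.of_forall fun y => ?_)
              simp [Matrix.mulVec, dotProduct, Finset.mul_sum]
              ring_nf
              refine Finset.sum_congr rfl fun j _ => by ring
          _ = ∫ y, |(B *ᵥ f y) i| ∂μ := by
              refine integral_congr_ae ?_
              filter_upwards [hfg] with y hy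
              rw [show (B *ᵥ f y) = (B *ᵥ g y) from by rw [hy]]
              by_cases h : 0 ≤ (B *ᵥ g y) i
              · simp [hφdef, h, abs_of_nonneg h]
              · simp [hφdef, h, abs_of_neg (lt_of_not_ge h)]
      rw [← hBvi]
      exact le_trans (le_abs_self _) (abs_coord_le_enorm2 _ i)
    rcases Nat.eq_zero_or_pos d with hd | hd
    · subst hd
      simpa using hSnn
    · have hd' : (0:ℝ) < d := by exact_mod_cast hd
      rw [inv_mul_le_iff₀ hd']
      rw [havg]
      have h1 : ∫ y, ‖LB B (f y)‖ ∂μ ≤ ∫ y, ∑ i, |(B *ᵥ f y) i| ∂μ := by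
        refine integral_mono henf (integrable_finset_sum _ fun i _ => (hBfi i).abs) fun y => ?_
        rw [← enorm2_LB]
        exact enorm2_le_sum_abs _
      calc c * ∫ y, ‖LB B (f y)‖ ∂μ ≤ c * ∫ y, ∑ i, |(B *ᵥ f y) i| ∂μ :=
            mul_le_mul_of_nonneg_left h1 hc0
        _ = ∑ i, c * ∫ y, |(B *ᵥ f y) i| ∂μ := by
            rw [integral_finset_sum _ fun i _ => (hBfi i).abs, Finset.mul_sum]
        _ ≤ ∑ _i : Fin d, sSup S := Finset.sum_le_sum fun i _ => key_i i
        _ = d * sSup S := by simp [Finset.sum_const, nsmul_eq_mul]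
  · exact Real.sSup_le key_ub (le_trans (by positivity) (key_ub 0 h0S))
end
end

section
/- Fix n ≥ 0. For each I ∈ 𝒟₊^{≤n}, let S_I denote the leftmost dyadic interval of length 2^{-n-1} contained in I (the interval of length 2^{-n-1} reached from I by always passing to the left half). Then the intervals {S_I : I ∈ 𝒟₊^{≤n}} are pairwise disjoint; that is, if I, I' ∈ 𝒟₊^{≤n} with I ≠ I', then S_I ∩ S_{I'} = ∅. -/
noncomputable section

lemma dyad_disjoint_aux (N a b : ℕ) (hab : a ≠ b) : dyad N a ∩ dyad N b = ∅ := by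
  ext x
  simp only [dyad, Set.mem_inter_iff, Set.mem_Ico, Set.mem_empty_iff_false, iff_false, not_and,
    and_imp]
  intro h1 h2 h3 h4
  have hpos : (0 : ℝ) < 2 ^ N := by positivity
  rw [lt_div_iff₀ hpos] at h2 h4
  rw [div_le_iff₀ hpos] at h1 h3
  rcases lt_or_gt_of_ne hab with h | h
  · have : (a : ℝ) + 1 ≤ b := by exact_mod_cast h
    linarith
  · have : (b : ℝ) + 1 ≤ a := by exact_mod_cast h
    linarith

/-- For `I = dyad m k ∈ 𝒟₊^{≤n}` (so `1 ≤ m ≤ n`, `k < 2^m`, `k` odd), the leftmost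
dyadic interval of length `2^{-(n+1)}` contained in `I` is
`S_I = dyad (n+1) (k·2^{n+1-m})`. These intervals are pairwise disjoint. -/
theorem leftmost_subintervals_disjoint (n : ℕ) (m k m' k' : ℕ)
    (hm1 : 1 ≤ m) (hmn : m ≤ n) (hk : k < 2 ^ m) (hodd : k % 2 = 1)
    (hm1' : 1 ≤ m') (hmn' : m' ≤ n) (hk' : k' < 2 ^ m') (hodd' : k' % 2 = 1)
    (hne : (m, k) ≠ (m', k')) :
    dyad (n + 1) (k * 2 ^ (n + 1 - m)) ∩ dyad (n + 1) (k' * 2 ^ (n + 1 - m')) = ∅ := by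
  apply dyad_disjoint_aux
  intro h
  have hmm : m = m' := by
    by_contra hmm
    rcases Nat.lt_or_ge m m' with h1 | h1
    · have he : n + 1 - m = (m' - m) + (n + 1 - m') := by omega
      rw [he, pow_add, ← mul_assoc] at h
      have h2 := Nat.eq_of_mul_eq_mul_right (Nat.pow_pos (by norm_num)) h
      have : 1 ≤ m' - m := by omega
      rcases Nat.exists_eq_add_of_le this with ⟨c, hc⟩
      have : k' = 2 * (k * 2 ^ c) := by rw [← h2, hc, pow_add]; ring
      omega
    · have h1' : m' < m := by omega
      have he : n + 1 - m' = (m - m') + (n + 1 - m) := by omega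
      rw [he, pow_add, ← mul_assoc] at h
      have h2 := Nat.eq_of_mul_eq_mul_right (Nat.pow_pos (by norm_num)) h
      have : 1 ≤ m - m' := by omega
      rcases Nat.exists_eq_add_of_le this with ⟨c, hc⟩
      have : k = 2 * (k' * 2 ^ c) := by rw [h2, hc, pow_add]; ring
      omega
  subst hmm
  have hkk : k = k' := Nat.eq_of_mul_eq_mul_right (Nat.pow_pos (by norm_num)) h
  exact hne (by rw [hkk])
end
end
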